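/- For the affine group Aff(F_q) = F_q ⋊ F_q^* over a finite field with q elements, q ≥ 2, we have D(Aff(F_q)) = 1 + q·σ(q - 1). -/

import Mathlib

/-- Sum of the orders of all normal subgroups of `G`. -/
noncomputable def D (G : Type*) [Group G] : ℕ :=
  ∑ᶠ N ∈ {N : Subgroup G | N.Normal}, Nat.card N

def AddAut.toMulAutMultiplicative (α : Type*) [AddGroup α] :
    Multiplicative (AddAut α) →* MulAut (Multiplicative α) where
  toFun f := AddEquiv.toMultiplicative (Multiplicative.toAdd f)
  map_one' := rfl
  map_mul' _ _ := rfl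

/-- The affine group `F ⋊ Fˣ` of a field `F`. -/
abbrev AffGroup (F : Type*) [Field F] :=
  SemidirectProduct (Multiplicative F) Fˣ
    ((AddAut.toMulAutMultiplicative F).comp (DistribMulAction.toAddAut Fˣ F))

open Subgroup SemidirectProduct

section Aux

lemma subgroup_eq_rootsOfUnity (F : Type*) [Field F] [Fintype F] (H : Subgroup Fˣ) :
    H = rootsOfUnity (Nat.card H) F := by
  have hpos : 0 < Nat.card H := Nat.card_pos
  have : NeZero (Nat.card H) := ⟨hpos.ne'⟩
  refine Subgroup.eq_of_le_of_card_ge ?_ ?_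
  · intro x hx
    rw [mem_rootsOfUnity]
    rw [← orderOf_dvd_iff_pow_eq_one, ← Subgroup.orderOf_mk x hx]
    exact orderOf_dvd_natCard _
  · exact card_rootsOfUnity ..

lemma card_subgroup_injective (F : Type*) [Field F] [Fintype F] :
    Function.Injective fun H : Subgroup Fˣ => Nat.card H := by
  intro H K h
  rw [subgroup_eq_rootsOfUnity F H, subgroup_eq_rootsOfUnity F K]
  simp only at h
  rw [h]

lemma exists_subgroup_card (F : Type*) [Field F] [Fintype F] {d : ℕ}
    (hd : d ∣ Nat.card Fˣ) : ∃ H : Subgroup Fˣ, Nat.card H = d := by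
  obtain ⟨g, hg⟩ := IsCyclic.exists_ofOrder_eq_natCard (α := Fˣ)
  refine ⟨Subgroup.zpowers (g ^ (Nat.card Fˣ / d)), ?_⟩
  have hd0 : d ≠ 0 := by rintro rfl; rw [Nat.zero_dvd] at hd; exact (Nat.card_pos (α := Fˣ)).ne' hd
  rw [Nat.card_zpowers, orderOf_pow, hg, Nat.gcd_eq_right (Nat.div_dvd_of_dvd hd),
    Nat.div_div_self hd (Nat.card_pos).ne']

lemma sum_card_subgroups (F : Type*) [Field F] [Fintype F] [Fintype (Subgroup Fˣ)] :
    ∑ H : Subgroup Fˣ, Nat.card H = ArithmeticFunction.sigma 1 (Nat.card Fˣ) := by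
  rw [ArithmeticFunction.sigma_apply]
  simp only [pow_one]
  refine Finset.sum_nbij (fun H => Nat.card H) ?_ ?_ ?_ ?_
  · intro H _
    exact Nat.mem_divisors.2 ⟨Subgroup.card_subgroup_dvd_card H, Nat.card_pos.ne'⟩
  · intro H _ K _ h
    exact card_subgroup_injective F h
  · intro d hd
    obtain ⟨H, hH⟩ := exists_subgroup_card F (Nat.mem_divisors.1 hd).1
    exact ⟨H, Finset.mem_univ _, hH⟩
  · intros; rfl

variable (F : Type*) [Field F]

lemma phi_apply (a : Fˣ) (b : Multiplicative F) :
    ((AddAut.toMulAutMultiplicative F).comp (DistribMulAction.toAddAut Fˣ F)) a b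
      = Multiplicative.ofAdd ((a : F) * b.toAdd) := by
  rfl

lemma mem_of_one_right {N : Subgroup (AffGroup F)} (x : AffGroup F) (hx : x.right = 1)
    (h : ∀ c : F, inl (Multiplicative.ofAdd c) ∈ N) : x ∈ N := by
  have : x = inl x.left := by ext <;> simp [hx]
  rw [this]
  simpa using h x.left.toAdd

lemma ker_le_of_ne_bot (N : Subgroup (AffGroup F)) [hN : N.Normal] (h : N ≠ ⊥) :
    (rightHom : AffGroup F →* Fˣ).ker ≤ N := by
  rw [Subgroup.ne_bot_iff_exists_ne_one] at h
  obtain ⟨⟨g, hgN⟩, hg1⟩ := h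
  have hg1 : g ≠ 1 := fun e => hg1 (Subtype.ext e)
  intro x hx
  rw [MonoidHom.mem_ker, rightHom_eq_right] at hx
  refine mem_of_one_right F x hx fun c => ?_
  by_cases hA : g.right = 1
  · -- g is a nontrivial translation
    have hgl : g = inl g.left := by ext <;> simp [hA]
    have hb : g.left.toAdd ≠ 0 := by
      intro e
      apply hg1
      rw [hgl]
      have : g.left = 1 := by
        have := congrArg Multiplicative.ofAdd e
        simpa using this
      rw [this, map_one]
    rcases eq_or_ne c 0 with rfl | hc
    · simpa using N.one_mem
    · set u : Fˣ := Units.mk0 (c / g.left.toAdd) (div_ne_zero hc hb) with hu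
      have key : inl (Multiplicative.ofAdd c) = inr u * g * (inr u)⁻¹ := by
        rw [hgl, ← map_inv, ← inl_aut, phi_apply]
        congr 1
        rw [hu]
        congr 1
        rw [Units.val_mk0]
        field_simp
      rw [key]
      exact hN.conj_mem g hgN (inr u)
  · -- g has nontrivial scaling part
    have ha : (g.right : F) ≠ 1 := fun e => hA (Units.ext e)
    have ha' : 1 - (g.right : F) ≠ 0 := sub_ne_zero.mpr (Ne.symm ha)
    set t : AffGroup F := inl (Multiplicative.ofAdd ((1 - (g.right : F))⁻¹ * c)) with ht
    have key : inl (Multiplicative.ofAdd c) = t * g * t⁻¹ * g⁻¹ := by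
      ext
      · show Multiplicative.ofAdd c = _
        simp only [ht, mul_left, inv_left, mul_right, inv_right, left_inl, right_inl, phi_apply,
          toAdd_ofAdd, toAdd_mul, toAdd_inv, ofAdd_add]
        simp only [← ofAdd_add, Units.val_mul, Units.val_one, Units.val_inv_eq_inv_val,
          one_mul, mul_one, inv_one]
        change (c : F) = (_ : F)
        have hgr : (g.right : F) ≠ 0 := Units.ne_zero _
        field_simp
        ring
      · simp [ht]
    rw [key]
    exact mul_mem (hN.conj_mem g hgN t) (inv_mem hgN)

lemma card_comap (H : Subgroup Fˣ) [Fintype F] :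
    Nat.card (H.comap (rightHom : AffGroup F →* Fˣ)) = Fintype.card F * Nat.card H := by
  have e : (H.comap (rightHom : AffGroup F →* Fˣ)) ≃ Multiplicative F × H :=
    { toFun := fun p => (p.1.left, ⟨p.1.right, p.2⟩)
      invFun := fun q => ⟨⟨q.1, q.2.1⟩, q.2.2⟩
      left_inv := fun p => rfl
      right_inv := fun q => rfl }
  rw [Nat.card_congr e, Nat.card_prod]
  congr 1
  simp [Nat.card_eq_fintype_card]

lemma affNormal_iff [Fintype F] (N : Subgroup (AffGroup F)) :
    N.Normal ↔ N = ⊥ ∨ ∃ H : Subgroup Fˣ, N = H.comap (rightHom : AffGroup F →* Fˣ) := by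
  constructor
  · intro hN
    rcases eq_or_ne N ⊥ with rfl | h
    · exact Or.inl rfl
    · refine Or.inr ⟨N.map rightHom, ?_⟩
      rw [Subgroup.comap_map_eq]
      exact (sup_eq_left.mpr (ker_le_of_ne_bot F N h)).symm
  · rintro (rfl | ⟨H, rfl⟩)
    · infer_instance
    · exact Subgroup.Normal.comap (Subgroup.normal_of_comm H) _

end Aux

theorem D_affGroup (F : Type*) [Field F] [Fintype F] :
    D (AffGroup F) = 1 + Fintype.card F * ArithmeticFunction.sigma 1 (Fintype.card F - 1) := by
  classical
  haveI : Fintype (Subgroup Fˣ) := Fintype.ofFinite _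
  have hset : {N : Subgroup (AffGroup F) | N.Normal} =
      ↑(insert (⊥ : Subgroup (AffGroup F))
        (Finset.image (fun H : Subgroup Fˣ =>
          H.comap (rightHom : AffGroup F →* Fˣ)) Finset.univ)) := by
    ext N
    simp only [Set.mem_setOf_eq, Finset.coe_insert, Set.mem_insert_iff, Finset.coe_image,
      Finset.coe_univ, Set.image_univ, Set.mem_range, affNormal_iff F N]
    constructor
    · rintro (h | ⟨H, h⟩)
      exacts [Or.inl h, Or.inr ⟨H, h.symm⟩]
    · rintro (h | ⟨H, h⟩)
      exacts [Or.inl h, Or.inr ⟨H, h.symm⟩]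
  rw [D, hset, finsum_mem_coe_finset]
  have hbot : (⊥ : Subgroup (AffGroup F)) ∉ Finset.image (fun H : Subgroup Fˣ =>
      H.comap (rightHom : AffGroup F →* Fˣ)) Finset.univ := by
    simp only [Finset.mem_image, Finset.mem_univ, true_and, not_exists]
    intro H hH
    have hker : (rightHom : AffGroup F →* Fˣ).ker ≤ H.comap rightHom := by
      intro x hx
      rw [Subgroup.mem_comap, MonoidHom.mem_ker.mp hx]
      exact H.one_mem
    rw [hH] at hker
    have h1 : inl (Multiplicative.ofAdd (1 : F)) ∈ (rightHom : AffGroup F →* Fˣ).ker := by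
      rw [MonoidHom.mem_ker]
      exact rightHom_inl _
    have h2 := Subgroup.mem_bot.mp (hker h1)
    rw [show (1 : AffGroup F) = inl 1 from (map_one _).symm, inl_inj] at h2
    exact one_ne_zero (α := F) (by simpa using congrArg Multiplicative.toAdd h2)
  rw [Finset.sum_insert hbot,
    Finset.sum_image (fun a _ b _ h => Subgroup.comap_injective rightHom_surjective h)]
  have hcard : ∀ H : Subgroup Fˣ, Nat.card (H.comap (rightHom : AffGroup F →* Fˣ))
      = Fintype.card F * Nat.card H := fun H => card_comap F H
  simp only [hcard]
  rw [← Finset.mul_sum, sum_card_subgroups F, Subgroup.card_bot,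
    Nat.card_eq_fintype_card (α := Fˣ), Fintype.card_units]
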